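/- Let σ be a probability measure supported on [0, T] with T > 0 such that f(λ) := σ([λ,∞))^{1/n} is concave on [0,T) and f(0)=1. Then for every p ∈ [1,∞), ∫ λ^p dσ(λ) ≥ T^p · p!n!/(n+p)! (with p!n!/(n+p)! interpreted via the Beta function for non-integer p). Consequently T ≤ \binom{n+p}{n}^{1/p} (∫ λ^p dσ)^{1/p}. -/

import Mathlib

open MeasureTheory

lemma real_beta (p : ℝ) (hp : 0 < p) (n : ℕ) :
    ∫ x in (0:ℝ)..1, x ^ (p-1) * (1-x)^n
      = Real.Gamma p * Real.Gamma (n+1) / Real.Gamma (p + (n+1)) := by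
  have h := Complex.Gamma_mul_Gamma_eq_betaIntegral (s := (p:ℂ)) (t := ((n:ℂ)+1))
    (by simpa using hp) (by simp; positivity)
  have hbeta : Complex.betaIntegral (p:ℂ) ((n:ℂ)+1)
      = ((∫ x in (0:ℝ)..1, x ^ (p-1) * (1-x)^n : ℝ) : ℂ) := by
    rw [Complex.betaIntegral, ← intervalIntegral.integral_ofReal]
    apply intervalIntegral.integral_congr
    intro x hx
    rw [Set.uIcc_of_le (by norm_num : (0:ℝ) ≤ 1)] at hx
    have hx0 : 0 ≤ x := hx.1
    have : ((n:ℂ) + 1 - 1) = ((n:ℕ) : ℂ) := by ring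
    simp only [this, Complex.cpow_natCast]
    have he : ((p:ℂ) - 1) = ((p - 1 : ℝ) : ℂ) := by push_cast; ring
    rw [he, ← Complex.ofReal_cpow hx0]
    push_cast
    ring
  rw [hbeta] at h
  have h2 : ((Real.Gamma p * Real.Gamma (n+1) : ℝ) : ℂ)
      = ((Real.Gamma (p + (n+1)) * ∫ x in (0:ℝ)..1, x ^ (p-1) * (1-x)^n : ℝ) : ℂ) := by
    push_cast
    rw [← Complex.Gamma_ofReal, ← Complex.Gamma_ofReal, ← Complex.Gamma_ofReal] at *
    push_cast at h ⊢
    rw [h]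
  have h3 := Complex.ofReal_inj.mp h2
  have hG : Real.Gamma (p + (n+1)) ≠ 0 := (Real.Gamma_pos_of_pos (by positivity)).ne'
  field_simp
  linarith [h3]

lemma beta_scaled (n : ℕ) (p T : ℝ) (hp : 1 ≤ p) (hT : 0 < T) :
    ∫ t in (0:ℝ)..T, p * t ^ (p-1) * (1 - t/T)^n
      = T ^ p * (Real.Gamma (p+1) * Real.Gamma ((n:ℝ)+1) / Real.Gamma ((n:ℝ) + p + 1)) := by
  have hp0 : 0 < p := lt_of_lt_of_le one_pos hp
  have key : ∫ t in (0:ℝ)..T, p * t ^ (p-1) * (1 - t/T)^n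
      = ∫ t in (0:ℝ)..T, (fun u => p * T^(p-1) * (u ^ (p-1) * (1-u)^n)) (t / T) := by
    apply intervalIntegral.integral_congr
    intro t ht
    rw [Set.uIcc_of_le hT.le] at ht
    simp only
    rw [Real.div_rpow ht.1 hT.le]
    have hTp : (T:ℝ)^(p-1) ≠ 0 := (Real.rpow_pos_of_pos hT _).ne'
    field_simp
  rw [key, intervalIntegral.integral_comp_div
      (fun u => p * T^(p-1) * (u ^ (p-1) * (1-u)^n)) hT.ne', zero_div, div_self hT.ne',
    intervalIntegral.integral_const_mul, real_beta p hp0 n]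
  have harg : p + ((n:ℝ)+1) = (n:ℝ)+p+1 := by ring
  rw [harg, Real.Gamma_add_one hp0.ne', smul_eq_mul,
    show p = 1 + (p-1) by ring, Real.rpow_add hT, Real.rpow_one]
  ring

lemma concave_tail_bound {T : ℝ} (hT : 0 < T) {f : ℝ → ℝ}
    (hconc : ConcaveOn ℝ (Set.Ico 0 T) f) (hf0 : f 0 = 1)
    (hfnn : ∀ x ∈ Set.Ico 0 T, 0 ≤ f x)
    {t : ℝ} (ht : t ∈ Set.Ico 0 T) : 1 - t / T ≤ f t := by
  rcases eq_or_lt_of_le ht.1 with h0 | h0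
  · rw [← h0, hf0]; simp [hT.le, div_nonneg]
  · have htT : t < T := ht.2
    apply le_of_forall_pos_le_add
    intro ε hε
    have hd : 0 < t / T + ε := by positivity
    set μ : ℝ := max ((t + T) / 2) (t / (t / T + ε)) with hμdef
    have hμ1 : t < μ := lt_of_lt_of_le (by linarith) (le_max_left _ _)
    have hμ0 : 0 < μ := lt_trans h0 hμ1
    have hμT : μ < T := by
      apply max_lt (by linarith)
      rw [div_lt_iff₀ hd]
      have : t < T * (t / T + ε) := by
        rw [mul_add, mul_div_cancel₀ _ hT.ne']
        nlinarith
      linarith [this]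
    have hmemμ : μ ∈ Set.Ico 0 T := ⟨hμ0.le, hμT⟩
    have hmem0 : (0:ℝ) ∈ Set.Ico 0 T := ⟨le_refl _, hT⟩
    have ha : 0 ≤ 1 - t / μ := by
      have : t / μ ≤ 1 := (div_le_one hμ0).2 hμ1.le
      linarith
    have hb : 0 ≤ t / μ := div_nonneg ht.1 hμ0.le
    have hab : (1 - t / μ) + t / μ = 1 := by ring
    have hkey := hconc.2 hmem0 hmemμ ha hb hab
    simp only [smul_eq_mul, mul_zero, zero_add, hf0, mul_one] at hkey
    rw [div_mul_cancel₀ _ hμ0.ne'] at hkey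
    have hfμ : 0 ≤ f μ := hfnn μ hmemμ
    have h1 : 1 - t / μ ≤ f t := by nlinarith
    have h2 : t / μ ≤ t / T + ε := by
      have hm : t / (t / T + ε) ≤ μ := le_max_right _ _
      calc t / μ ≤ t / (t / (t / T + ε)) :=
            div_le_div_of_nonneg_left ht.1 (by positivity) hm
        _ = t / T + ε := div_div_cancel₀ h0.ne'
    linarith

theorem spectral_measure_moment_bound (n : ℕ) (hn : 1 ≤ n)
    (σ : Measure ℝ) [IsProbabilityMeasure σ] (T : ℝ) (hT : 0 < T)
    (hsupp : σ (Set.Icc 0 T)ᶜ = 0)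
    (hconc : ConcaveOn ℝ (Set.Ico 0 T)
      (fun lam : ℝ => (σ (Set.Ici lam)).toReal ^ ((n : ℝ)⁻¹)))
    (hf0 : (σ (Set.Ici (0:ℝ))).toReal ^ ((n : ℝ)⁻¹) = 1)
    (p : ℝ) (hp : 1 ≤ p) :
    T ^ p * (Real.Gamma (p + 1) * Real.Gamma ((n : ℝ) + 1) / Real.Gamma ((n : ℝ) + p + 1))
        ≤ ∫ x, x ^ p ∂σ ∧
    T ≤ (Real.Gamma ((n : ℝ) + p + 1) / (Real.Gamma ((n : ℝ) + 1) * Real.Gamma (p + 1)))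
          ^ (1 / p) * (∫ x, x ^ p ∂σ) ^ (1 / p) := by
  have hp0 : 0 < p := lt_of_lt_of_le one_pos hp
  set C : ℝ := Real.Gamma (p + 1) * Real.Gamma ((n : ℝ) + 1) / Real.Gamma ((n : ℝ) + p + 1)
    with hCdef
  have hCpos : 0 < C := by
    rw [hCdef]
    exact div_pos (mul_pos (Real.Gamma_pos_of_pos (by positivity : (0:ℝ) < p + 1))
      (Real.Gamma_pos_of_pos (by positivity : (0:ℝ) < (n:ℝ) + 1)))
      (Real.Gamma_pos_of_pos (by positivity : (0:ℝ) < (n:ℝ) + p + 1))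
  have hae : ∀ᵐ x ∂σ, x ∈ Set.Icc 0 T := by
    rw [ae_iff]
    have : {x : ℝ | ¬ x ∈ Set.Icc 0 T} = (Set.Icc 0 T)ᶜ := rfl
    rw [this, hsupp]
  -- tail lower bound
  have tail_bound : ∀ t ∈ Set.Ico (0:ℝ) T,
      ENNReal.ofReal ((1 - t / T) ^ n) ≤ σ (Set.Ici t) := by
    intro t ht
    have hfnn : ∀ x ∈ Set.Ico (0:ℝ) T,
        0 ≤ (σ (Set.Ici x)).toReal ^ ((n : ℝ)⁻¹) :=
      fun x _ => Real.rpow_nonneg ENNReal.toReal_nonneg _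
    have h1 := concave_tail_bound hT hconc hf0 hfnn ht
    have hnn : 0 ≤ 1 - t / T := by
      have : t / T < 1 := (div_lt_one hT).2 ht.2
      linarith
    have h2 : (1 - t / T) ^ n ≤ (σ (Set.Ici t)).toReal := by
      calc (1 - t / T) ^ n ≤ ((σ (Set.Ici t)).toReal ^ ((n : ℝ)⁻¹)) ^ n :=
            pow_le_pow_left₀ hnn h1 n
        _ = (σ (Set.Ici t)).toReal :=
            Real.rpow_inv_natCast_pow ENNReal.toReal_nonneg (by omega)
    calc ENNReal.ofReal ((1 - t / T) ^ n) ≤ ENNReal.ofReal ((σ (Set.Ici t)).toReal) :=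
          ENNReal.ofReal_le_ofReal h2
      _ = σ (Set.Ici t) := ENNReal.ofReal_toReal (measure_ne_top σ _)
  -- layercake
  have f_nn : 0 ≤ᵐ[σ] (id : ℝ → ℝ) := hae.mono fun x hx => hx.1
  have g_intble : ∀ t > (0:ℝ), IntervalIntegrable (fun s => p * s ^ (p-1)) volume 0 t :=
    fun t _ => (intervalIntegral.intervalIntegrable_rpow' (by linarith)).const_mul p
  have g_nn : ∀ᵐ t ∂(volume.restrict (Set.Ioi (0:ℝ))), 0 ≤ p * t ^ (p-1) := by
    rw [ae_restrict_iff' measurableSet_Ioi]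
    exact Filter.Eventually.of_forall fun t ht => by
      have : (0:ℝ) < t := ht
      positivity
  have key := lintegral_comp_eq_lintegral_meas_le_mul σ f_nn aemeasurable_id g_intble g_nn
  have hint : ∀ ω : ℝ, (∫ s in (0:ℝ)..ω, p * s ^ (p-1)) = ω ^ p := by
    intro ω
    rw [intervalIntegral.integral_const_mul, integral_rpow (Or.inl (by linarith)),
      show p - 1 + 1 = p by ring, Real.zero_rpow hp0.ne']
    field_simp
    rw [sub_zero]
  simp only [id_eq, hint] at key
  set I : ENNReal := ∫⁻ t in Set.Ioi (0:ℝ), σ {a | t ≤ a} * ENNReal.ofReal (p * t ^ (p-1))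
    with hIdef
  -- finiteness
  have hJ_le : (∫⁻ ω, ENNReal.ofReal (ω ^ p) ∂σ) ≤ ENNReal.ofReal (T ^ p) := by
    calc (∫⁻ ω, ENNReal.ofReal (ω ^ p) ∂σ) ≤ ∫⁻ _, ENNReal.ofReal (T ^ p) ∂σ := by
          apply lintegral_mono_ae
          filter_upwards [hae] with x hx
          exact ENNReal.ofReal_le_ofReal (Real.rpow_le_rpow hx.1 hx.2 hp0.le)
      _ = ENNReal.ofReal (T ^ p) := by simp
  have hIfin : I ≠ ⊤ := by
    rw [← key]
    exact (lt_of_le_of_lt hJ_le ENNReal.ofReal_lt_top).ne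
  -- Bochner integral equals toReal of lintegral
  have hBochner : ∫ x, x ^ p ∂σ = (∫⁻ ω, ENNReal.ofReal (ω ^ p) ∂σ).toReal := by
    apply integral_eq_lintegral_of_nonneg_ae
    · exact hae.mono fun x hx => Real.rpow_nonneg hx.1 p
    · exact ((Real.continuous_rpow_const hp0.le).measurable).aestronglyMeasurable
  -- lower bound for I
  have hlower : ENNReal.ofReal (T ^ p * C) ≤ I := by
    have step1 : (∫⁻ t in Set.Ioo (0:ℝ) T,
        ENNReal.ofReal ((1 - t/T)^n * (p * t ^ (p-1)))) ≤ I := by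
      rw [hIdef]
      refine le_trans ?_ (lintegral_mono_set (s := Set.Ioo (0:ℝ) T) Set.Ioo_subset_Ioi_self)
      apply lintegral_mono_ae
      rw [ae_restrict_iff' measurableSet_Ioo]
      apply Filter.Eventually.of_forall
      intro t ht
      have hnn : 0 ≤ (1 - t/T)^n := by
        have : t / T < 1 := (div_lt_one hT).2 ht.2
        exact pow_nonneg (by linarith) n
      rw [ENNReal.ofReal_mul hnn]
      exact mul_le_mul_left (tail_bound t ⟨ht.1.le, ht.2⟩) _
    refine le_trans (le_of_eq ?_) step1
    have hintgr : IntegrableOn (fun t => (1 - t/T)^n * (p * t ^ (p-1)))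
        (Set.Ioo 0 T) volume := by
      have hg : IntegrableOn (fun t => p * t ^ (p-1)) (Set.Ioo 0 T) volume := by
        have := (intervalIntegrable_iff_integrableOn_Ioc_of_le hT.le).1 (g_intble T hT)
        exact this.mono_set Set.Ioo_subset_Ioc_self
      apply Integrable.mono' hg
      · exact (((measurable_const.sub (measurable_id.div_const T)).pow_const n).mul
          (((Real.continuous_rpow_const (by linarith : (0:ℝ) ≤ p - 1)).measurable).const_mul
            p)).aestronglyMeasurable
      · rw [ae_restrict_iff' measurableSet_Ioo]
        apply Filter.Eventually.of_forall
        intro t ht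
        have h1 : t / T < 1 := (div_lt_one hT).2 ht.2
        have h2 : 0 ≤ 1 - t/T := by linarith
        have h4 : (0:ℝ) < t := ht.1
        have h5' : 0 ≤ t / T := div_nonneg h4.le hT.le
        have h3 : (1 - t/T)^n ≤ 1 := pow_le_one₀ h2 (by linarith)
        have h5 : (0:ℝ) ≤ p * t ^ (p-1) := by positivity
        rw [Real.norm_eq_abs, abs_of_nonneg (by positivity)]
        nlinarith
    have hnnae : 0 ≤ᵐ[volume.restrict (Set.Ioo (0:ℝ) T)]
        fun t => (1 - t/T)^n * (p * t ^ (p-1)) := by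
      have : ∀ᵐ t ∂(volume.restrict (Set.Ioo (0:ℝ) T)),
          0 ≤ (1 - t/T)^n * (p * t ^ (p-1)) := by
        rw [ae_restrict_iff' measurableSet_Ioo]
        refine Filter.Eventually.of_forall fun t ht => ?_
        have h1 : t / T < 1 := (div_lt_one hT).2 ht.2
        have h4 : (0:ℝ) < t := ht.1
        have h2 : (0:ℝ) ≤ 1 - t/T := by linarith
        positivity
      exact this
    rw [← ofReal_integral_eq_lintegral_ofReal hintgr hnnae]
    congr 1
    rw [← integral_Ioc_eq_integral_Ioo, ← intervalIntegral.integral_of_le hT.le]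
    rw [show (T : ℝ) ^ p * C = ∫ t in (0:ℝ)..T, p * t ^ (p-1) * (1 - t/T)^n from
      (beta_scaled n p T hp hT).symm]
    apply intervalIntegral.integral_congr
    intro t _
    ring
  -- first conclusion
  have first : T ^ p * C ≤ ∫ x, x ^ p ∂σ := by
    rw [hBochner, key]
    exact (ENNReal.ofReal_le_iff_le_toReal hIfin).1 hlower
  refine ⟨first, ?_⟩
  -- second conclusion
  have hM : 0 < ∫ x, x ^ p ∂σ := lt_of_lt_of_le (by positivity) first
  have hTp : T ^ p ≤ C⁻¹ * ∫ x, x ^ p ∂σ := by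
    rw [inv_mul_eq_div, le_div_iff₀ hCpos]
    linarith [first]
  have hstep : (T ^ p) ^ (1/p) ≤ (C⁻¹ * ∫ x, x ^ p ∂σ) ^ (1/p) :=
    Real.rpow_le_rpow (Real.rpow_nonneg hT.le p) hTp (by positivity)
  have hTple : T = (T ^ p) ^ (1/p) := by
    rw [← Real.rpow_mul hT.le, mul_one_div, div_self hp0.ne', Real.rpow_one]
  rw [hTple]
  refine le_trans hstep (le_of_eq ?_)
  rw [Real.mul_rpow (by positivity) hM.le]
  congr 1
  rw [hCdef, inv_div]
  ring
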